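/- In the trivial bundle π : ℝ² → ℝ (base coordinate x) with connection Φ = (dx - dy) ⊗ ∂/∂y, the horizontal lift through (0,0) of the base curve x(t) = t is t ↦ (t, t). Consequently, for the structure with R^A = {(x,y) : y ≠ 0} and the section s(x) = (x, 0): A ⊩₀ ¬R(s) (s avoids R^A on all of ℝ), but A^Φ ⊮_{(0,0)} ¬R(x), since along the path σ(t) = t the horizontal lift (t, t) lies in R^A for all t ≠ 0, so {t : (t,t) ∉ R^A} = {0} is not open. -/

import Mathlib

/-- `R^A = {(x,y) : y ≠ 0}` in the trivial bundle `π : ℝ² → ℝ`, `π(x,y) = x`. -/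
def RA : Set (ℝ × ℝ) := {p | p.2 ≠ 0}

/-- in the trivial bundle with connection `Φ = (dx - dy) ⊗ ∂/∂y`:
(1) the horizontal lift through `(0,0)` of the base curve `x(t) = t` (whose fiber
component solves `y' = 1`, `y(0) = 0`) is `t ↦ (t,t)`;
(2) the section `s(x) = (x,0)` avoids `R^A` everywhere, so `A ⊩₀ ¬R(s)`;
(3) nevertheless parallel forcing fails: `{t : (t,t) ∉ R^A} = {0}` is not open, so
`A^Φ ⊮_{(0,0)} ¬R(x)`. -/
theorem pointwise_forcing_differs_from_parallel_forcing :
    (∀ y : ℝ → ℝ, (∀ t, HasDerivAt y 1 t) → y 0 = 0 → ∀ t, y t = t) ∧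
    (∀ u : ℝ, ((u, 0) : ℝ × ℝ) ∉ RA) ∧
    ({t : ℝ | ((t, t) : ℝ × ℝ) ∉ RA} = {0} ∧ ¬ IsOpen ({0} : Set ℝ)) := by
  refine ⟨?_, ?_, ?_, ?_⟩
  · intro y hy h0 t
    have hd : ∀ s : ℝ, HasDerivAt (fun t => y t - t) 0 s := by
      intro s
      have h := (hy s).sub (hasDerivAt_id' s)
      rw [sub_self] at h
      exact h
    have hconst := is_const_of_deriv_eq_zero
      (fun s => (hd s).differentiableAt) (fun s => (hd s).deriv) t 0
    have : y t - t = y 0 - 0 := hconst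
    simp [h0] at this
    linarith
  · intro u h
    exact h rfl
  · ext t
    simp [RA]
  · intro h
    have := h.mem_nhds rfl
    obtain ⟨ε, hε, hball⟩ := Metric.mem_nhds_iff.mp this
    have : (ε/2 : ℝ) ∈ Metric.ball (0:ℝ) ε := by
      simp [abs_of_pos, hε, half_lt_self hε, Real.dist_eq, abs_of_nonneg (le_of_lt (half_pos hε))]
    have := hball this
    simp at this
    exact absurd this (by positivity)
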